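/- S(π) avoids the classical pattern 321 if and only if π avoids each of the three classical patterns 45231, 35241 and 34251. -/

import Mathlib

/-- Pop from the stack (top first) all letters smaller than `x`;
returns (popped output, remaining stack). -/
def stackPop (x : ℕ) : List ℕ → List ℕ × List ℕ
  | [] => ([], [])
  | t :: ts =>
    if t < x then
      let p := stackPop x ts
      (t :: p.1, p.2)
    else ([], t :: ts)

/-- Run the stack-sorting procedure with the given stack and input;
at the end the (increasing) stack is flushed to the output. -/
def stackRun : List ℕ → List ℕ → List ℕ
  | stack, [] => stack
  | stack, x :: xs =>
    let p := stackPop x stack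
    p.1 ++ stackRun (x :: p.2) xs

/-- The stack-sort operator: one pass of a permutation (word) through a stack. -/
def S (w : List ℕ) : List ℕ := stackRun [] w

/-- `w` is (the one-line notation of) a permutation of `{1, …, n}`. -/
def IsPermOf (w : List ℕ) (n : ℕ) : Prop := w.Perm (List.range' 1 n)

/-- The identity permutation `1 2 ⋯ n` in one-line notation. -/
def idPerm (n : ℕ) : List ℕ := List.range' 1 n

/-- `w` contains the classical pattern 321. -/
def Contains321 (w : List ℕ) : Prop :=
  ∃ i j k : Fin w.length, i < j ∧ j < k ∧ w.get j < w.get i ∧ w.get k < w.get j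

/-- `w` contains the classical pattern 45231. -/
def Contains45231 (w : List ℕ) : Prop :=
  ∃ i1 i2 i3 i4 i5 : Fin w.length, i1 < i2 ∧ i2 < i3 ∧ i3 < i4 ∧ i4 < i5 ∧
    w.get i5 < w.get i3 ∧ w.get i3 < w.get i4 ∧ w.get i4 < w.get i1 ∧
    w.get i1 < w.get i2

/-- `w` contains the classical pattern 35241. -/
def Contains35241 (w : List ℕ) : Prop :=
  ∃ i1 i2 i3 i4 i5 : Fin w.length, i1 < i2 ∧ i2 < i3 ∧ i3 < i4 ∧ i4 < i5 ∧
    w.get i5 < w.get i3 ∧ w.get i3 < w.get i1 ∧ w.get i1 < w.get i4 ∧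
    w.get i4 < w.get i2

/-- `w` contains the classical pattern 34251. -/
def Contains34251 (w : List ℕ) : Prop :=
  ∃ i1 i2 i3 i4 i5 : Fin w.length, i1 < i2 ∧ i2 < i3 ∧ i3 < i4 ∧ i4 < i5 ∧
    w.get i5 < w.get i3 ∧ w.get i3 < w.get i1 ∧ w.get i1 < w.get i2 ∧
    w.get i2 < w.get i4

section StackSortAux
open List

lemma stackPop_eq (x : ℕ) : ∀ l : List ℕ,
    stackPop x l = (l.takeWhile (· < x), l.dropWhile (· < x))
  | [] => rfl
  | t :: ts => by
    rw [stackPop]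
    by_cases h : t < x <;>
      simp [h, List.takeWhile_cons, List.dropWhile_cons, stackPop_eq x ts]

lemma stackRun_perm : ∀ (xs st : List ℕ), (stackRun st xs).Perm (st ++ xs)
  | [], st => by simp [stackRun]
  | x :: xs, st => by
    rw [stackRun, stackPop_eq]
    refine List.Perm.trans ((stackRun_perm xs _).append_left _) ?_
    conv_rhs => rw [← List.takeWhile_append_dropWhile (p := (· < x : ℕ → Bool)) (l := st)]
    rw [List.append_assoc]
    exact (List.perm_middle.symm).append_left _

open List

lemma mem_dropWhile_ge (x : ℕ) : ∀ (l : List ℕ), l.Pairwise (· < ·) →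
    ∀ b ∈ l.dropWhile (· < x), x ≤ b
  | [], _, b, hb => by simp at hb
  | h :: t, hs, b, hb => by
    rw [List.dropWhile_cons] at hb
    by_cases hh : h < x
    · simp only [hh, decide_eq_true_eq, if_pos, decide_true] at hb
      exact mem_dropWhile_ge x t (List.pairwise_cons.1 hs).2 b hb
    · have hb' : b = h ∨ b ∈ t := by simpa [hh] using hb
      rcases hb' with rfl | hb'
      · omega
      · have := (List.pairwise_cons.1 hs).1 b hb'; omega

lemma sorted_cons_dropWhile (x : ℕ) (l : List ℕ) (hs : l.Pairwise (· < ·)) (hx : x ∉ l) :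
    (x :: l.dropWhile (· < x)).Pairwise (· < ·) := by
  rw [List.pairwise_cons]
  refine ⟨fun b hb => ?_, List.Pairwise.sublist (List.dropWhile_sublist _) hs⟩
  have h1 := mem_dropWhile_ge x l hs b hb
  have h2 : b ≠ x := by
    rintro rfl; exact hx ((List.dropWhile_sublist _).subset hb)
  omega

lemma mem_takeWhile_of_lt (x : ℕ) {l : List ℕ} (hs : l.Pairwise (· < ·)) {b : ℕ}
    (hb : b ∈ l) (hbx : b < x) : b ∈ l.takeWhile (· < x) := by
  rw [← List.takeWhile_append_dropWhile (p := fun t => decide (t < x)) (l := l),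
    List.mem_append] at hb
  rcases hb with hb | hb
  · exact hb
  · have := mem_dropWhile_ge x l hs b hb; omega

lemma sorted_pair_lt {l : List ℕ} (hs : l.Pairwise (· < ·)) {a b : ℕ}
    (h : [b, a] <+ l) : b < a := by
  have := List.Pairwise.sublist h hs
  exact (List.pairwise_cons.1 this).1 a (by simp)

lemma getElem_pair_sublist {l : List ℕ} {i j : ℕ} (hij : i < j) (hj : j < l.length) :
    [l[i]'(by omega), l[j]] <+ l := by
  have h1 : [l[i]'(by omega)] <+ l.take (i + 1) := by
    rw [List.singleton_sublist]
    have ht : (l.take (i + 1))[i]'(by simp; omega) = l[i]'(by omega) := List.getElem_take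
    rw [← ht]; exact List.getElem_mem _
  have h2 : [l[j]] <+ l.drop (i + 1) := by
    rw [List.singleton_sublist]
    have ht : (l.drop (i + 1))[j - (i + 1)]'(by simp; omega) = l[j] := by
      rw [List.getElem_drop]; congr 1; omega
    rw [← ht]; exact List.getElem_mem _
  have := h1.append h2
  simpa [List.take_append_drop] using this

set_option maxHeartbeats 1000000 in
lemma getElem_triple_sublist {l : List ℕ} {i j k : ℕ} (hij : i < j) (hjk : j < k)
    (hk : k < l.length) : [l[i]'(by omega), l[j]'(by omega), l[k]] <+ l := by
  obtain ⟨m, rfl⟩ : ∃ m, j = i + 1 + m := ⟨j - (i + 1), by omega⟩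
  obtain ⟨p, rfl⟩ : ∃ p, k = i + 1 + p := ⟨k - (i + 1), by omega⟩
  have h1 : [l[i]'(by omega)] <+ l.take (i + 1) := by
    rw [List.singleton_sublist]
    have ht : (l.take (i + 1))[i]'(by simp; omega) = l[i]'(by omega) := List.getElem_take
    rw [← ht]; exact List.getElem_mem _
  have h2 : [(l.drop (i+1))[m]'(by rw [List.length_drop]; omega),
      (l.drop (i+1))[p]'(by rw [List.length_drop]; omega)] <+ l.drop (i + 1) :=
    getElem_pair_sublist (by omega) (by rw [List.length_drop]; omega)
  rw [List.getElem_drop, List.getElem_drop] at h2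
  have := h1.append h2
  simpa [List.take_append_drop] using this

lemma exists_fin_of_pair {l : List ℕ} {x y : ℕ} (h : [x, y] <+ l) :
    ∃ i j : Fin l.length, i < j ∧ l.get i = x ∧ l.get j = y := by
  obtain ⟨f, hf⟩ := List.sublist_iff_exists_fin_orderEmbedding_get_eq.1 h
  have h01 : (⟨0, by norm_num⟩ : Fin ([x, y].length)) < ⟨1, by norm_num⟩ := by
    rw [Fin.mk_lt_mk]; norm_num
  refine ⟨f ⟨0, by norm_num⟩, f ⟨1, by norm_num⟩, f.lt_iff_lt.2 h01, ?_, ?_⟩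
  · exact (hf ⟨0, by norm_num⟩).symm
  · exact (hf ⟨1, by norm_num⟩).symm

lemma exists_fin_of_triple {l : List ℕ} {x y z : ℕ} (h : [x, y, z] <+ l) :
    ∃ i j k : Fin l.length, i < j ∧ j < k ∧ l.get i = x ∧ l.get j = y ∧ l.get k = z := by
  obtain ⟨f, hf⟩ := List.sublist_iff_exists_fin_orderEmbedding_get_eq.1 h
  have h01 : (⟨0, by norm_num⟩ : Fin ([x, y, z].length)) < ⟨1, by norm_num⟩ := by
    rw [Fin.mk_lt_mk]; norm_num
  have h12 : (⟨1, by norm_num⟩ : Fin ([x, y, z].length)) < ⟨2, by norm_num⟩ := by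
    rw [Fin.mk_lt_mk]; norm_num
  refine ⟨f ⟨0, by norm_num⟩, f ⟨1, by norm_num⟩, f ⟨2, by norm_num⟩,
    f.lt_iff_lt.2 h01, f.lt_iff_lt.2 h12, ?_, ?_, ?_⟩
  · exact (hf ⟨0, by norm_num⟩).symm
  · exact (hf ⟨1, by norm_num⟩).symm
  · exact (hf ⟨2, by norm_num⟩).symm

lemma stackRun_inv : ∀ (xs st : List ℕ), st.Pairwise (· < ·) → (st ++ xs).Nodup →
    ∀ a b : ℕ, a < b →
    ([b, a] <+ stackRun st xs ↔
      (b ∈ st ∧ ∃ c, b < c ∧ [c, a] <+ xs) ∨ (∃ c, b < c ∧ [b, c, a] <+ xs))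
  | [], st, hs, _, a, b, hab => by
    rw [stackRun]
    constructor
    · intro h; exact absurd (sorted_pair_lt hs h) (by omega)
    · rintro (⟨_, c, _, hc⟩ | ⟨c, _, hc⟩) <;> simp at hc
  | x :: xs, st, hs, hnd, a, b, hab => by
    rw [stackRun, stackPop_eq]
    simp only
    set T := st.takeWhile (· < x) with hT
    set D := st.dropWhile (· < x) with hD
    have hTD : T ++ D = st := List.takeWhile_append_dropWhile
    have hTsub : T <+ st := by rw [hT]; exact List.takeWhile_sublist _
    have hDsub : D <+ st := by rw [hD]; exact List.dropWhile_sublist _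
    have hx_st : x ∉ st := fun hx =>
      (List.disjoint_of_nodup_append hnd) hx (by simp)
    have hsD : (x :: D).Pairwise (· < ·) := sorted_cons_dropWhile x st hs hx_st
    have hndD : ((x :: D) ++ xs).Nodup := by
      have hsub : D ++ x :: xs <+ st ++ x :: xs := by
        rw [← hTD, List.append_assoc]
        exact List.sublist_append_right _ _
      have h1 : (D ++ x :: xs).Nodup := hnd.sublist hsub
      exact List.perm_middle.nodup h1
    have IH := stackRun_inv xs (x :: D) hsD hndD a b hab
    have memrun : ∀ y, y ∈ stackRun (x :: D) xs ↔ y ∈ x :: (D ++ xs) := fun y =>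
      (stackRun_perm xs (x :: D)).mem_iff
    constructor
    · intro h
      rcases List.sublist_append_iff.1 h with ⟨l₁, l₂, heq, h₁, h₂⟩
      cases l₁ with
      | nil =>
        simp only [List.nil_append] at heq
        subst heq
        rcases IH.1 h₂ with ⟨hbD, c, hbc, hca⟩ | ⟨c, hbc, hbca⟩
        · rcases List.mem_cons.1 hbD with rfl | hbD'
          · exact Or.inr ⟨c, hbc, hca.cons₂ _⟩
          · exact Or.inl ⟨hTD ▸ List.mem_append_right T hbD', c, hbc, hca.cons _⟩
        · exact Or.inr ⟨c, hbc, hbca.cons _⟩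
      | cons u t =>
        rw [List.cons_append] at heq
        injection heq with hub heq2
        subst hub
        cases t with
        | nil =>
          simp only [List.nil_append] at heq2
          subst heq2
          have hbT : b ∈ T := List.singleton_sublist.1 h₁
          have hbx : b < x := by
            have := List.mem_takeWhile_imp hbT; simpa using this
          have haR : a ∈ x :: (D ++ xs) := (memrun a).1 (List.singleton_sublist.1 h₂)
          have haxs : a ∈ xs := by
            rcases List.mem_cons.1 haR with rfl | haDxs
            · omega
            · rcases List.mem_append.1 haDxs with haD | h'
              · have := mem_dropWhile_ge x st hs a haD; omega
              · exact h'
          exact Or.inl ⟨hTsub.subset hbT,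
            x, hbx, (List.singleton_sublist.2 haxs).cons₂ _⟩
        | cons v t2 =>
          injection heq2 with hva heq3
          subst hva
          have : t2 = [] := by
            cases t2 with
            | nil => rfl
            | cons _ _ => simp at heq3
          subst this
          have hTs : T.Pairwise (· < ·) := List.Pairwise.sublist hTsub hs
          have := sorted_pair_lt hTs h₁
          omega
    · intro h
      have toRight : ∀ {u : List ℕ}, u <+ stackRun (x :: D) xs → u <+ T ++ stackRun (x :: D) xs :=
        fun h' => h'.trans (List.sublist_append_right _ _)
      have pairTB : b ∈ T → a ∈ xs → [b, a] <+ T ++ stackRun (x :: D) xs := by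
        intro hbT haxs
        have : [b] ++ [a] <+ T ++ stackRun (x :: D) xs :=
          (List.singleton_sublist.2 hbT).append
            (List.singleton_sublist.2 ((memrun a).2 (by simp [haxs])))
        simpa using this
      rcases h with ⟨hbst, c, hbc, hca⟩ | ⟨c, hbc, hbca⟩
      · cases hca with
        | cons _ h' =>
          have haxs : a ∈ xs := h'.subset (by simp)
          by_cases hbx : b < x
          · exact pairTB (mem_takeWhile_of_lt x hs hbst hbx) haxs
          · have hbD : b ∈ D := by
              rcases List.mem_append.1 (hTD ▸ hbst) with hbT | hbD
              · have := List.mem_takeWhile_imp hbT; simp at this; omega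
              · exact hbD
            exact toRight (IH.2 (Or.inl ⟨by simp [hbD], c, hbc, h'⟩))
        | cons_cons _ h' =>
          have haxs : a ∈ xs := h'.subset (by simp)
          exact pairTB (mem_takeWhile_of_lt x hs hbst hbc) haxs
      · cases hbca with
        | cons _ h' => exact toRight (IH.2 (Or.inr ⟨c, hbc, h'⟩))
        | cons_cons _ h' => exact toRight (IH.2 (Or.inl ⟨by simp, c, hbc, h'⟩))


lemma S_perm (w : List ℕ) : (S w).Perm w := by
  simpa [S] using stackRun_perm w []

lemma pair_S_iff {w : List ℕ} (hw : w.Nodup) {a b : ℕ} (hab : a < b) :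
    [b, a] <+ S w ↔ ∃ c, b < c ∧ [b, c, a] <+ w := by
  have := stackRun_inv w [] (by simp) (by simpa using hw) a b hab
  simpa [S] using this

lemma contains321_of_pairs {l : List ℕ} (hl : l.Nodup) {u v t : ℕ} (hvu : v < u) (htv : t < v)
    (h1 : [u, v] <+ l) (h2 : [v, t] <+ l) : Contains321 l := by
  obtain ⟨r1, r2, hr, hgr1, hgr2⟩ := exists_fin_of_pair h1
  obtain ⟨s1, s2, hsx, hgs1, hgs2⟩ := exists_fin_of_pair h2
  have hrs : r2 = s1 := hl.get_inj_iff.1 (by rw [hgr2, hgs1])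
  subst hrs
  exact ⟨r1, r2, s2, hr, hsx, by rw [hgr1, hgr2]; exact hvu, by rw [hgr2, hgs2]; exact htv⟩

lemma pattern_step {w : List ℕ} (hwnd : w.Nodup) {i1 i2 i3 i4 i5 : Fin w.length}
    (h12 : i1 < i2) (h23 : i2 < i3) (h34 : i3 < i4) (h45 : i4 < i5)
    (hvu : w.get i3 < w.get i1) (hud : w.get i1 < w.get i2) (htv : w.get i5 < w.get i3)
    (hve : w.get i3 < w.get i4) : Contains321 (S w) := by
  have hSnd : (S w).Nodup := (S_perm w).nodup_iff.2 hwnd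
  have t1 : [w.get i1, w.get i2, w.get i3] <+ w := by
    have := getElem_triple_sublist (l := w) (i := i1.val) (j := i2.val) (k := i3.val)
      h12 h23 i3.isLt
    simpa [List.get_eq_getElem] using this
  have t2 : [w.get i3, w.get i4, w.get i5] <+ w := by
    have := getElem_triple_sublist (l := w) (i := i3.val) (j := i4.val) (k := i5.val)
      h34 h45 i5.isLt
    simpa [List.get_eq_getElem] using this
  have h1 : [w.get i1, w.get i3] <+ S w := (pair_S_iff hwnd hvu).2 ⟨w.get i2, hud, t1⟩
  have h2 : [w.get i3, w.get i5] <+ S w := (pair_S_iff hwnd htv).2 ⟨w.get i4, hve, t2⟩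
  exact contains321_of_pairs hSnd hvu htv h1 h2

lemma key_iff {w : List ℕ} (hwnd : w.Nodup) :
    Contains321 (S w) ↔ (Contains45231 w ∨ Contains35241 w ∨ Contains34251 w) := by
  have hSnd : (S w).Nodup := (S_perm w).nodup_iff.2 hwnd
  constructor
  · rintro ⟨i, j, k, hij, hjk, hvu, htv⟩
    have hsub : [(S w).get i, (S w).get j, (S w).get k] <+ S w := by
      have := getElem_triple_sublist (l := S w) (i := i.val) (j := j.val) (k := k.val)
        hij hjk k.isLt
      simpa [List.get_eq_getElem] using this
    have h1 : [(S w).get i, (S w).get j] <+ S w :=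
      (((List.nil_sublist [(S w).get k]).cons₂ ((S w).get j)).cons₂ ((S w).get i)).trans hsub
    have h2 : [(S w).get j, (S w).get k] <+ S w :=
      ((List.Sublist.refl [(S w).get j, (S w).get k]).cons ((S w).get i)).trans hsub
    obtain ⟨d, hud, hudv⟩ := (pair_S_iff hwnd hvu).1 h1
    obtain ⟨e, hve, hvet⟩ := (pair_S_iff hwnd htv).1 h2
    obtain ⟨p1, p2, p3, hp12, hp23, hgp1, hgp2, hgp3⟩ := exists_fin_of_triple hudv
    obtain ⟨q1, q2, q3, hq12, hq23, hgq1, hgq2, hgq3⟩ := exists_fin_of_triple hvet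
    have hp3q1 : p3 = q1 := hwnd.get_inj_iff.1 (by rw [hgp3, hgq1])
    subst hp3q1
    have hne1 : w.get q2 ≠ w.get p1 := by
      intro h
      have := hwnd.get_inj_iff.1 h
      have h1' : p1 < p3 := hp12.trans hp23
      rw [← this] at h1'
      exact absurd (h1'.trans hq12) (lt_irrefl _)
    have hne2 : w.get q2 ≠ w.get p2 := by
      intro h
      have := hwnd.get_inj_iff.1 h
      rw [this] at hq12
      exact absurd (hp23.trans hq12) (lt_irrefl _)
    rcases Nat.lt_trichotomy (w.get q2) (w.get p1) with heu | heu | heu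
    · -- e < u : 45231
      refine Or.inl ⟨p1, p2, p3, q2, q3, hp12, hp23, hq12, hq23, ?_, ?_, ?_, ?_⟩
      · rw [hgq3, hgp3]; exact htv
      · rw [hgp3, hgq2]; exact hve
      · exact heu.trans_eq (by rw [hgp1])|>.trans_eq' (by rw [hgq2])
      · rw [hgp1, hgp2]; exact hud
    · exact absurd heu hne1
    · rcases Nat.lt_trichotomy (w.get q2) (w.get p2) with hed | hed | hed
      · -- u < e < d : 35241
        refine Or.inr (Or.inl ⟨p1, p2, p3, q2, q3, hp12, hp23, hq12, hq23, ?_, ?_, ?_, ?_⟩)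
        · rw [hgq3, hgp3]; exact htv
        · rw [hgp3, hgp1]; exact hvu
        · exact heu
        · exact hed
      · exact absurd hed hne2
      · -- d < e : 34251
        refine Or.inr (Or.inr ⟨p1, p2, p3, q2, q3, hp12, hp23, hq12, hq23, ?_, ?_, ?_, ?_⟩)
        · rw [hgq3, hgp3]; exact htv
        · rw [hgp3, hgp1]; exact hvu
        · rw [hgp1, hgp2]; exact hud
        · exact hed
  · rintro (⟨i1, i2, i3, i4, i5, h12, h23, h34, h45, c1, c2, c3, c4⟩ |
      ⟨i1, i2, i3, i4, i5, h12, h23, h34, h45, c1, c2, c3, c4⟩ |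
      ⟨i1, i2, i3, i4, i5, h12, h23, h34, h45, c1, c2, c3, c4⟩)
    · exact pattern_step hwnd h12 h23 h34 h45 (c2.trans c3) c4 c1 c2
    · exact pattern_step hwnd h12 h23 h34 h45 c2 (c3.trans c4) c1 (c2.trans c3)
    · exact pattern_step hwnd h12 h23 h34 h45 c2 c3 c1 ((c2.trans c3).trans c4)

end StackSortAux

/-- `S(π)` avoids 321 iff `π` avoids 45231, 35241 and 34251. -/
theorem S_avoids321_iff (n : ℕ) (w : List ℕ) (hw : IsPermOf w n) :
    ¬ Contains321 (S w) ↔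
      ¬ Contains45231 w ∧ ¬ Contains35241 w ∧ ¬ Contains34251 w := by
  have hwnd : w.Nodup := hw.nodup_iff.2 (List.nodup_range' (s := 1) (n := n))
  have key := key_iff hwnd
  constructor
  · intro h
    exact ⟨fun hc => h (key.2 (Or.inl hc)), fun hc => h (key.2 (Or.inr (Or.inl hc))),
      fun hc => h (key.2 (Or.inr (Or.inr hc)))⟩
  · rintro ⟨h1, h2, h3⟩ hC
    rcases key.1 hC with h | h | h
    · exact h1 h
    · exact h2 h
    · exact h3 h
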